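/- arXiv:2212.02727 — 2 statements merged into one kernel-verified Lean document; each statement's English description precedes it below -/
import Mathlib

section
/- Let S : X ⇉ Y be a set-valued mapping between Banach spaces, Ω ⊆ X, and (x̄, ȳ) ∈ gph S with x̄ ∈ Ω. If S is Lipschitz-like relative to Ω around (x̄, ȳ) with constant κ ≥ 0, then there exists δ > 0 such that for all ε ≥ 0 and all (x, y) ∈ gph S|_Ω with ‖x − x̄‖ ≤ δ, ‖y − ȳ‖ ≤ δ: whenever (x*, −y*) ∈ N̂_ε((x, y); gph S|_Ω) and x* ∈ J_X(T(x; Ω)), one has ‖x*‖ ≤ κ‖y*‖ + ε(1 + κ). -/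
open Filter Topology NormedSpace

section Defs

variable {X Y : Type*} [NormedAddCommGroup X] [NormedSpace ℝ X]
  [NormedAddCommGroup Y] [NormedSpace ℝ Y]

/-- Restricted graph `gph S|_Ω`. -/
def GraphRes (S : X → Set Y) (Ω : Set X) : Set (X × Y) := {p | p.1 ∈ Ω ∧ p.2 ∈ S p.1}

/-- Bouligand contingent cone. -/
def Contingent (Ω : Set X) (x : X) : Set X :=
  {v | ∃ t : ℕ → ℝ, ∃ w : ℕ → X, (∀ k, 0 < t k) ∧ Tendsto t atTop (𝓝 0) ∧
    Tendsto w atTop (𝓝 v) ∧ ∀ k, x + t k • w k ∈ Ω}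

/-- `J_X(T(x; Ω))`: duality-mapping image of the contingent cone. -/
def JCone (Ω : Set X) (x : X) : Set (StrongDual ℝ X) :=
  {f | ∃ v ∈ Contingent Ω x, f v = ‖v‖ ^ 2 ∧ ‖f‖ = ‖v‖}

/-- `ε`-normals to a subset of `X × Y` (sum norm); the functional is `(f,g)`. -/
def IsEpsNormalProd (C : Set (X × Y)) (p : X × Y) (ε : ℝ)
    (f : StrongDual ℝ X) (g : StrongDual ℝ Y) : Prop :=
  ∀ γ > (0 : ℝ), ∃ δ > (0 : ℝ), ∀ q ∈ C, ‖q.1 - p.1‖ + ‖q.2 - p.2‖ < δ →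
    f (q.1 - p.1) + g (q.2 - p.2) ≤ (ε + γ) * (‖q.1 - p.1‖ + ‖q.2 - p.2‖)

/-- `S` has the Lipschitz-like property relative to `Ω` around `(xb, yb)` with constant `κ`. -/
def LipschitzLikeRel (S : X → Set Y) (Ω : Set X) (xb : X) (yb : Y) (κ : ℝ) : Prop :=
  ∃ V ∈ 𝓝 xb, ∃ W ∈ 𝓝 yb, ∀ x ∈ Ω ∩ V, ∀ x' ∈ Ω ∩ V, ∀ y ∈ S x' ∩ W,
    ∃ z ∈ S x, ‖y - z‖ ≤ κ * ‖x' - x‖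

end Defs

/-- Neighborhood necessary condition for the relative Lipschitz-like property:
`‖x*‖ ≤ κ‖y*‖ + ε(1+κ)` for all `(x*, −y*) ∈ N̂_ε((x,y); gph S|_Ω) ∩ [J_X(T(x;Ω)) × Y*]`
with `(x,y) ∈ gph S|_Ω` near `(xb, yb)`. -/
theorem relative_lipschitz_necessity {X Y : Type*}
    [NormedAddCommGroup X] [NormedSpace ℝ X] [CompleteSpace X]
    [NormedAddCommGroup Y] [NormedSpace ℝ Y] [CompleteSpace Y]
    {S : X → Set Y} {Ω : Set X} {xb : X} {yb : Y} {κ : ℝ} (hκ : 0 ≤ κ)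
    (hxy : (xb, yb) ∈ GraphRes S Ω) (hLip : LipschitzLikeRel S Ω xb yb κ) :
    ∃ δ > (0 : ℝ), ∀ ε : ℝ, 0 ≤ ε → ∀ x y, (x, y) ∈ GraphRes S Ω →
      ‖x - xb‖ ≤ δ → ‖y - yb‖ ≤ δ →
      ∀ (xstar : StrongDual ℝ X) (ystar : StrongDual ℝ Y),
        IsEpsNormalProd (GraphRes S Ω) (x, y) ε xstar (-ystar) →
        xstar ∈ JCone Ω x →
        ‖xstar‖ ≤ κ * ‖ystar‖ + ε * (1 + κ) := by
  obtain ⟨V, hV, W, hW, hLL⟩ := hLip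
  obtain ⟨r1, hr1, hV'⟩ := Metric.mem_nhds_iff.mp hV
  obtain ⟨r2, hr2, hW'⟩ := Metric.mem_nhds_iff.mp hW
  have hmin : (0:ℝ) < min r1 r2 := lt_min hr1 hr2
  refine ⟨min r1 r2 / 2, by positivity, ?_⟩
  intro ε hε x y hxyS hx hy xstar ystar hN hJ
  obtain ⟨v, hv, hfv, hnorm⟩ := hJ
  rcases eq_or_ne v 0 with h0 | h0
  · rw [h0, norm_zero] at hnorm
    rw [hnorm]; positivity
  have hvpos : 0 < ‖v‖ := norm_pos_iff.mpr h0
  obtain ⟨t, w, ht, htlim, hwlim, hmem⟩ := hv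
  have hxV : x ∈ V := hV' (by
    simp only [Metric.mem_ball, dist_eq_norm]
    have h1 : min r1 r2 ≤ r1 := min_le_left _ _
    linarith)
  have hyW : y ∈ W := hW' (by
    simp only [Metric.mem_ball, dist_eq_norm]
    have h1 : min r1 r2 ≤ r2 := min_le_right _ _
    linarith)
  have key : ∀ γ > (0:ℝ), ‖xstar‖ ≤ κ * ‖ystar‖ + (ε + γ) * (1 + κ) := by
    intro γ hγ
    obtain ⟨δ', hδ', hineq⟩ := hN γ hγ
    set c : ℝ := κ * ‖ystar‖ + (ε + γ) * (1 + κ) with hc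
    have htw : Tendsto (fun k => t k * ‖w k‖) atTop (𝓝 0) := by
      have := htlim.mul hwlim.norm
      simpa using this
    have hev1 : ∀ᶠ k in atTop, (1 + κ) * (t k * ‖w k‖) < δ' := by
      have h : Tendsto (fun k => (1 + κ) * (t k * ‖w k‖)) atTop (𝓝 0) := by
        simpa using htw.const_mul (1 + κ)
      exact h.eventually (eventually_lt_nhds hδ')
    have hev2 : ∀ᶠ k in atTop, t k * ‖w k‖ < min r1 r2 / 2 := by
      exact htw.eventually (eventually_lt_nhds (by positivity))
    have hkey : ∀ᶠ k in atTop, xstar (w k) ≤ c * ‖w k‖ := by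
      filter_upwards [hev1, hev2] with k h1 h2
      have htk := ht k
      have htwnn : 0 ≤ t k * ‖w k‖ := by positivity
      set xk := x + t k • w k with hxk
      have hxkΩ : xk ∈ Ω := hmem k
      have hnormsmul : ‖t k • w k‖ = t k * ‖w k‖ := by
        rw [norm_smul, Real.norm_eq_abs, abs_of_pos htk]
      have hxkV : xk ∈ V := hV' (by
        simp only [Metric.mem_ball, dist_eq_norm]
        have hsub : xk - xb = t k • w k + (x - xb) := by
          rw [hxk]; abel
        have hle : ‖xk - xb‖ ≤ t k * ‖w k‖ + ‖x - xb‖ := by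
          rw [hsub, ← hnormsmul]; exact norm_add_le _ _
        have h3 : min r1 r2 ≤ r1 := min_le_left _ _
        linarith)
      obtain ⟨z, hz, hzle⟩ := hLL xk ⟨hxkΩ, hxkV⟩ x ⟨hxyS.1, hxV⟩ y ⟨hxyS.2, hyW⟩
      have hxxk : ‖x - xk‖ = t k * ‖w k‖ := by
        rw [hxk]
        have : x - (x + t k • w k) = -(t k • w k) := by abel
        rw [this, norm_neg, hnormsmul]
      rw [hxxk] at hzle
      have hzy : ‖z - y‖ ≤ κ * (t k * ‖w k‖) := by
        rw [norm_sub_rev]; exact hzle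
      have hxkx : ‖xk - x‖ = t k * ‖w k‖ := by
        rw [hxk]
        have : x + t k • w k - x = t k • w k := by abel
        rw [this, hnormsmul]
      have hsum : ‖xk - x‖ + ‖z - y‖ ≤ (1 + κ) * (t k * ‖w k‖) := by
        have e : (1 + κ) * (t k * ‖w k‖) = t k * ‖w k‖ + κ * (t k * ‖w k‖) := by ring
        rw [hxkx]; linarith
      have hq := hineq (xk, z) ⟨hxkΩ, hz⟩ (lt_of_le_of_lt hsum h1)
      simp only at hq
      have hmap : xstar (xk - x) = t k * xstar (w k) := by
        rw [hxk]
        have : x + t k • w k - x = t k • w k := by abel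
        rw [this, map_smul]; rfl
      have hneg : (-ystar) (z - y) = -(ystar (z - y)) := by simp
      rw [hmap, hneg] at hq
      have hyb : ystar (z - y) ≤ ‖ystar‖ * (κ * (t k * ‖w k‖)) := by
        calc ystar (z - y) ≤ ‖ystar (z - y)‖ := Real.le_norm_self _
          _ ≤ ‖ystar‖ * ‖z - y‖ := ystar.le_opNorm _
          _ ≤ ‖ystar‖ * (κ * (t k * ‖w k‖)) :=
              mul_le_mul_of_nonneg_left hzy (norm_nonneg ystar)
      have hrhs : (ε + γ) * (‖xk - x‖ + ‖z - y‖) ≤ (ε + γ) * ((1 + κ) * (t k * ‖w k‖)) :=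
        mul_le_mul_of_nonneg_left hsum (by linarith)
      have e1 : ‖ystar‖ * (κ * (t k * ‖w k‖)) + (ε + γ) * ((1 + κ) * (t k * ‖w k‖))
          = (κ * ‖ystar‖ + (ε + γ) * (1 + κ)) * (t k * ‖w k‖) := by ring
      have e2 : t k * (c * ‖w k‖) = (κ * ‖ystar‖ + (ε + γ) * (1 + κ)) * (t k * ‖w k‖) := by
        rw [hc]; ring
      have hmain : t k * xstar (w k) ≤ t k * (c * ‖w k‖) := by
        rw [e2]; linarith
      exact le_of_mul_le_mul_left hmain htk
    have hlim1 : Tendsto (fun k => xstar (w k)) atTop (𝓝 (xstar v)) :=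
      (xstar.continuous.tendsto v).comp hwlim
    have hlim2 : Tendsto (fun k => c * ‖w k‖) atTop (𝓝 (c * ‖v‖)) :=
      hwlim.norm.const_mul c
    have hfin : xstar v ≤ c * ‖v‖ := le_of_tendsto_of_tendsto hlim1 hlim2 hkey
    rw [hfv] at hfin
    have : ‖v‖ ≤ c := by nlinarith
    rw [hnorm]; exact this
  have hpos : (0:ℝ) < 1 + κ := by linarith
  refine le_of_forall_pos_le_add ?_
  intro η hη
  have := key (η / (1 + κ)) (by positivity)
  have heq : (ε + η / (1 + κ)) * (1 + κ) = ε * (1 + κ) + η := by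
    field_simp
  linarith [this, heq ▸ this]
end

section
/- Necessity part of the pointbased criterion: let S : X ⇉ Y be a set-valued mapping between Banach spaces, Ω ⊆ X, and suppose S is Lipschitz-like relative to Ω around (x̄, ȳ) ∈ gph S|_Ω with constant κ. Then (a) S is PSNC relative to Ω at (x̄, ȳ), and (b) the outer norm of the relative mixed contingent coderivative satisfies |D*_M S_Ω(x̄|ȳ)|⁺ ≤ κ; in particular D*_M S_Ω(x̄|ȳ)(0) = {0}. -/
open Filter Topology NormedSpace

section Defs

variable {X Y : Type*} [NormedAddCommGroup X] [NormedSpace ℝ X]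
  [NormedAddCommGroup Y] [NormedSpace ℝ Y]

/-- Weak* convergence of a sequence of functionals. -/
def WeakStarTendsto (fs : ℕ → StrongDual ℝ X) (f : StrongDual ℝ X) : Prop :=
  ∀ v : X, Tendsto (fun k => fs k v) atTop (𝓝 (f v))

/-- The mixed contingent coderivative of `S` relative to `Ω` (with `Θ = Y`). -/
def MixedCoderivOm (S : X → Set Y) (Ω : Set X) (xb : X) (yb : Y)
    (ystar : StrongDual ℝ Y) : Set (StrongDual ℝ X) :=
  {xstar | ∃ (ε : ℕ → ℝ) (x : ℕ → X) (y : ℕ → Y)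
      (xs : ℕ → StrongDual ℝ X) (ys : ℕ → StrongDual ℝ Y),
    (∀ k, 0 ≤ ε k) ∧ Tendsto ε atTop (𝓝 0) ∧
    (∀ k, (x k, y k) ∈ GraphRes S Ω) ∧
    Tendsto x atTop (𝓝 xb) ∧ Tendsto y atTop (𝓝 yb) ∧
    Tendsto ys atTop (𝓝 ystar) ∧ WeakStarTendsto xs xstar ∧
    ∀ k, IsEpsNormalProd (GraphRes S Ω) (x k, y k) (ε k) (xs k) (-(ys k)) ∧
      xs k ∈ JCone Ω (x k)}

/-- `S` is PSNC relative to `Ω` at `(xb, yb)`. -/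
def RelPSNC (S : X → Set Y) (Ω : Set X) (xb : X) (yb : Y) : Prop :=
  ∀ (ε : ℕ → ℝ) (x : ℕ → X) (y : ℕ → Y) (xs : ℕ → StrongDual ℝ X) (ys : ℕ → StrongDual ℝ Y),
    (∀ k, 0 ≤ ε k) → Tendsto ε atTop (𝓝 0) →
    (∀ k, (x k, y k) ∈ GraphRes S Ω) →
    Tendsto x atTop (𝓝 xb) → Tendsto y atTop (𝓝 yb) →
    (∀ k, IsEpsNormalProd (GraphRes S Ω) (x k, y k) (ε k) (xs k) (-(ys k)) ∧
      xs k ∈ JCone Ω (x k)) →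
    WeakStarTendsto xs 0 → Tendsto ys atTop (𝓝 0) →
    Tendsto (fun k => ‖xs k‖) atTop (𝓝 0)

end Defs

section Aux

variable {X Y : Type*} [NormedAddCommGroup X] [NormedSpace ℝ X]
  [NormedAddCommGroup Y] [NormedSpace ℝ Y]

/-- Neighborhood necessary condition: `‖x*‖ ≤ κ‖y*‖ + ε(1+κ)`. -/
lemma keyBound {S : X → Set Y} {Ω : Set X} {κ : ℝ} (hκ : 0 ≤ κ)
    {V : Set X} {W : Set Y} (hV : IsOpen V)
    (hL : ∀ x ∈ Ω ∩ V, ∀ x' ∈ Ω ∩ V, ∀ y ∈ S x' ∩ W, ∃ z ∈ S x, ‖y - z‖ ≤ κ * ‖x' - x‖)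
    {x : X} {y : Y} (hx : x ∈ Ω) (hxV : x ∈ V) (hy : y ∈ S x) (hyW : y ∈ W)
    {ε : ℝ} (hε : 0 ≤ ε) {f : StrongDual ℝ X} {g : StrongDual ℝ Y}
    (hN : IsEpsNormalProd (GraphRes S Ω) (x, y) ε f (-g))
    (hJ : f ∈ JCone Ω x) :
    ‖f‖ ≤ κ * ‖g‖ + ε * (1 + κ) := by
  obtain ⟨v, hv, hfv, hfn⟩ := hJ
  rw [hfn]
  rcases eq_or_lt_of_le (norm_nonneg v) with h0 | h0
  · rw [← h0]; positivity
  have main : ∀ γ : ℝ, 0 < γ →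
      f v ≤ (κ * ‖g‖ + (ε + γ) * (1 + κ)) * ‖v‖ := by
    intro γ hγ
    obtain ⟨δ, hδ, hineq⟩ := hN γ hγ
    obtain ⟨t, w, ht, htlim, hwlim, hmem⟩ := hv
    have hx'lim : Tendsto (fun k => x + t k • w k) atTop (𝓝 x) := by
      have h1 : Tendsto (fun k => t k • w k) atTop (𝓝 ((0:ℝ) • v)) :=
        htlim.smul hwlim
      simpa using tendsto_const_nhds.add h1
    have hEV : ∀ᶠ k in atTop, x + t k • w k ∈ V :=
      hx'lim.eventually_mem (hV.mem_nhds hxV)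
    have hsmalllim : Tendsto (fun k => (1 + κ) * (t k * ‖w k‖)) atTop (𝓝 0) := by
      have h1 : Tendsto (fun k => t k * ‖w k‖) atTop (𝓝 (0 * ‖v‖)) :=
        htlim.mul hwlim.norm
      have h2 := (tendsto_const_nhds (x := (1 + κ))).mul h1
      simpa using h2
    have hES : ∀ᶠ k in atTop, (1 + κ) * (t k * ‖w k‖) < δ :=
      hsmalllim.eventually (gt_mem_nhds hδ)
    have hEb : ∀ᶠ k in atTop,
        f (w k) ≤ (κ * ‖g‖ + (ε + γ) * (1 + κ)) * ‖w k‖ := by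
      filter_upwards [hEV, hES] with k hkV hkS
      have htk := ht k
      obtain ⟨z, hz, hzy⟩ := hL (x + t k • w k) ⟨hmem k, hkV⟩ x ⟨hx, hxV⟩ y ⟨hy, hyW⟩
      have hnorm1 : ‖x - (x + t k • w k)‖ = t k * ‖w k‖ := by
        rw [show x - (x + t k • w k) = -(t k • w k) by abel, norm_neg, norm_smul,
          Real.norm_eq_abs, abs_of_pos htk]
      have hnorm2 : ‖(x + t k • w k) - x‖ = t k * ‖w k‖ := by
        rw [show (x + t k • w k) - x = t k • w k by abel, norm_smul,
          Real.norm_eq_abs, abs_of_pos htk]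
      have hzy' : ‖z - y‖ ≤ κ * (t k * ‖w k‖) := by
        rw [norm_sub_rev]
        calc ‖y - z‖ ≤ κ * ‖x - (x + t k • w k)‖ := hzy
          _ = κ * (t k * ‖w k‖) := by rw [hnorm1]
      have hd : ‖(x + t k • w k) - x‖ + ‖z - y‖ < δ := by
        rw [hnorm2]; nlinarith
      have H := hineq (x + t k • w k, z) ⟨hmem k, hz⟩ hd
      simp only [map_sub] at H
      have Hs : t k * f (w k) - g (z - y)
          ≤ (ε + γ) * (t k * ‖w k‖ + ‖z - y‖) := by
        have e1 : f ((x + t k • w k) - x) = t k * f (w k) := by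
          rw [show (x + t k • w k) - x = t k • w k by abel, map_smul]; rfl
        have e2 : (-g) (z - y) = -(g (z - y)) := by simp
        calc t k * f (w k) - g (z - y)
            = f ((x + t k • w k) - x) + (-g) (z - y) := by rw [e1, e2]; ring
          _ ≤ (ε + γ) * (‖(x + t k • w k) - x‖ + ‖z - y‖) := by
              have := hineq (x + t k • w k, z) ⟨hmem k, hz⟩ hd
              simpa using this
          _ = (ε + γ) * (t k * ‖w k‖ + ‖z - y‖) := by rw [hnorm2]
      have Hg : g (z - y) ≤ ‖g‖ * ‖z - y‖ :=
        le_trans (le_abs_self _) (g.le_opNorm _)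
      have h1 : ‖g‖ * ‖z - y‖ ≤ ‖g‖ * (κ * (t k * ‖w k‖)) :=
        mul_le_mul_of_nonneg_left hzy' (norm_nonneg g)
      have h2 : (ε + γ) * (t k * ‖w k‖ + ‖z - y‖)
          ≤ (ε + γ) * ((1 + κ) * (t k * ‖w k‖)) := by
        have hwn : (0:ℝ) ≤ t k * ‖w k‖ := by positivity
        have : t k * ‖w k‖ + ‖z - y‖ ≤ (1 + κ) * (t k * ‖w k‖) := by nlinarith
        exact mul_le_mul_of_nonneg_left this (by linarith)
      rw [← mul_le_mul_iff_right₀ htk]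
      nlinarith [Hs, Hg, h1, h2]
    have hlim1 : Tendsto (fun k => f (w k)) atTop (𝓝 (f v)) :=
      (f.continuous.tendsto v).comp hwlim
    have hlim2 : Tendsto (fun k => (κ * ‖g‖ + (ε + γ) * (1 + κ)) * ‖w k‖) atTop
        (𝓝 ((κ * ‖g‖ + (ε + γ) * (1 + κ)) * ‖v‖)) :=
      tendsto_const_nhds.mul hwlim.norm
    exact le_of_tendsto_of_tendsto hlim1 hlim2 hEb
  apply le_of_forall_pos_le_add
  intro c hc
  have h1κ : (0:ℝ) < 1 + κ := by linarith
  have hγ : 0 < c / (1 + κ) := div_pos hc h1κ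
  have H := main _ hγ
  rw [hfv] at H
  have hle : ‖v‖ ≤ κ * ‖g‖ + (ε + c / (1 + κ)) * (1 + κ) := by nlinarith [H, h0]
  have heq : (ε + c / (1 + κ)) * (1 + κ) = ε * (1 + κ) + c := by
    field_simp
  linarith [hle, heq.le, heq.ge]

end Aux


/-- Necessity in the pointbased characterization: if `S` is Lipschitz-like relative to
`Ω` around `(xb, yb)` with constant `κ`, then (a) `S` is PSNC relative to `Ω` at
`(xb, yb)`, (b) `|D*_M S_Ω(xb|yb)|⁺ ≤ κ`, and in particular
`D*_M S_Ω(xb|yb)(0) = {0}`. -/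
theorem relative_lipschitz_implies_psnc_and_coderiv_bound {X Y : Type*}
    [NormedAddCommGroup X] [NormedSpace ℝ X] [CompleteSpace X]
    [NormedAddCommGroup Y] [NormedSpace ℝ Y] [CompleteSpace Y]
    {S : X → Set Y} {Ω : Set X} {xb : X} {yb : Y} {κ : ℝ} (hκ : 0 ≤ κ)
    (hxy : (xb, yb) ∈ GraphRes S Ω) (hLip : LipschitzLikeRel S Ω xb yb κ) :
    RelPSNC S Ω xb yb ∧
    (∀ ystar : StrongDual ℝ Y, ∀ xstar ∈ MixedCoderivOm S Ω xb yb ystar,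
      ‖xstar‖ ≤ κ * ‖ystar‖) ∧
    MixedCoderivOm S Ω xb yb 0 = {0} := by
  obtain ⟨V0, hV0, W, hW, hL0⟩ := hLip
  have hVopen : IsOpen (interior V0) := isOpen_interior
  have hxbV : xb ∈ interior V0 := mem_interior_iff_mem_nhds.2 hV0
  have hL : ∀ x ∈ Ω ∩ interior V0, ∀ x' ∈ Ω ∩ interior V0, ∀ y ∈ S x' ∩ W,
      ∃ z ∈ S x, ‖y - z‖ ≤ κ * ‖x' - x‖ := by
    intro a ha a' ha' y hy
    exact hL0 a ⟨ha.1, interior_subset ha.2⟩ a' ⟨ha'.1, interior_subset ha'.2⟩ y hy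
  -- (b) first, as a `have`
  have hb : ∀ ystar : StrongDual ℝ Y, ∀ xstar ∈ MixedCoderivOm S Ω xb yb ystar,
      ‖xstar‖ ≤ κ * ‖ystar‖ := by
    intro ystar xstar hmemC
    obtain ⟨ε, x, y, xs, ys, hε, hεlim, hmemG, hxlim, hylim, hyslim, hws, hnorm⟩ := hmemC
    have hEx : ∀ᶠ k in atTop, x k ∈ interior V0 :=
      hxlim.eventually_mem (hVopen.mem_nhds hxbV)
    have hEy : ∀ᶠ k in atTop, y k ∈ W := hylim.eventually_mem hW
    have hEb : ∀ᶠ k in atTop, ‖xs k‖ ≤ κ * ‖ys k‖ + ε k * (1 + κ) := by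
      filter_upwards [hEx, hEy] with k hkV hkW
      exact keyBound hκ hVopen hL (hmemG k).1 hkV (hmemG k).2 hkW (hε k)
        (hnorm k).1 (hnorm k).2
    refine ContinuousLinearMap.opNorm_le_bound _ (by positivity) fun v => ?_
    have h1 : Tendsto (fun k => |xs k v|) atTop (𝓝 |xstar v|) :=
      (continuous_abs.tendsto _).comp (hws v)
    have h2 : Tendsto (fun k => (κ * ‖ys k‖ + ε k * (1 + κ)) * ‖v‖) atTop
        (𝓝 ((κ * ‖ystar‖ + 0 * (1 + κ)) * ‖v‖)) :=
      ((tendsto_const_nhds.mul hyslim.norm).add (hεlim.mul tendsto_const_nhds)).mul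
        tendsto_const_nhds
    have hE : ∀ᶠ k in atTop, |xs k v| ≤ (κ * ‖ys k‖ + ε k * (1 + κ)) * ‖v‖ := by
      filter_upwards [hEb] with k hk
      calc |xs k v| = ‖xs k v‖ := (Real.norm_eq_abs _).symm
        _ ≤ ‖xs k‖ * ‖v‖ := (xs k).le_opNorm v
        _ ≤ (κ * ‖ys k‖ + ε k * (1 + κ)) * ‖v‖ :=
            mul_le_mul_of_nonneg_right hk (norm_nonneg v)
    have := le_of_tendsto_of_tendsto h1 h2 hE
    rw [Real.norm_eq_abs]
    calc |xstar v| ≤ (κ * ‖ystar‖ + 0 * (1 + κ)) * ‖v‖ := this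
      _ = κ * ‖ystar‖ * ‖v‖ := by ring
  refine ⟨?_, hb, ?_⟩
  · -- (a) PSNC
    intro ε x y xs ys hε hεlim hmemG hxlim hylim hnorm hws hyslim
    have hEx : ∀ᶠ k in atTop, x k ∈ interior V0 :=
      hxlim.eventually_mem (hVopen.mem_nhds hxbV)
    have hEy : ∀ᶠ k in atTop, y k ∈ W := hylim.eventually_mem hW
    have hEb : ∀ᶠ k in atTop, ‖xs k‖ ≤ κ * ‖ys k‖ + ε k * (1 + κ) := by
      filter_upwards [hEx, hEy] with k hkV hkW
      exact keyBound hκ hVopen hL (hmemG k).1 hkV (hmemG k).2 hkW (hε k)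
        (hnorm k).1 (hnorm k).2
    have hRHS : Tendsto (fun k => κ * ‖ys k‖ + ε k * (1 + κ)) atTop (𝓝 0) := by
      have h1 : Tendsto (fun k => κ * ‖ys k‖) atTop (𝓝 (κ * ‖(0 : StrongDual ℝ Y)‖)) :=
        (tendsto_const_nhds (x := κ)).mul hyslim.norm
      have h2 : Tendsto (fun k => ε k * (1 + κ)) atTop (𝓝 (0 * (1 + κ))) :=
        hεlim.mul (tendsto_const_nhds (x := (1 + κ)))
      simpa using h1.add h2
    exact squeeze_zero' (Eventually.of_forall fun k => norm_nonneg _) hEb hRHS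
  · -- (c)
    ext xstar
    simp only [Set.mem_singleton_iff]
    constructor
    · intro h
      have := hb 0 xstar h
      simpa [norm_le_zero_iff] using this
    · rintro rfl
      refine ⟨fun _ => 0, fun _ => xb, fun _ => yb, fun _ => 0, fun _ => 0,
        fun _ => le_refl 0, tendsto_const_nhds, fun _ => hxy,
        tendsto_const_nhds, tendsto_const_nhds, tendsto_const_nhds,
        fun v => tendsto_const_nhds, fun k => ⟨?_, ?_⟩⟩
      · intro γ hγ
        refine ⟨1, one_pos, fun q hq hd => ?_⟩
        simp only [ContinuousLinearMap.zero_apply, neg_zero, add_zero, zero_add]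
        positivity
      · refine ⟨0, ⟨fun k => 1 / (k + 1), fun _ => 0, fun k => by positivity,
          tendsto_one_div_add_atTop_nhds_zero_nat, tendsto_const_nhds,
          fun k => by simpa using hxy.1⟩, by simp, by simp⟩
end
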